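/- Let σ : G → G be a bijection with σ(0) = 0. (i) If σ is an orientation-preserving automorphism, i.e., σ(x + ρ₀(y−x)) = σ(x) + ρ₀(σ(y) − σ(x)) for every dart (x,y), then there exists an integer ℓ such that σ(a) = ρ₀^ℓ(a) for every nonzero a ∈ G. (ii) If σ is an orientation-reversing automorphism, i.e., σ(x + ρ₀(y−x)) = σ(x) + ρ₀^{−1}(σ(y) − σ(x)) for every dart (x,y), then for any fixed nonzero a ∈ G there exists an integer ℓ such that σ(ρ₀^{j}(a)) = ρ₀^{ℓ−j}(a) for every integer j. -/

import Mathlib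

/-- Let `G` be a finite abelian group of order `v ≥ 3` and let `ρ₀` be a
permutation of `G` fixing `0` which acts as a single cycle of length `v−1` on `G \ {0}`.
Let `σ : G → G` be a bijection with `σ(0) = 0`.
(i) If `σ` is an orientation-preserving automorphism, then there exists an integer `ℓ` such that
`σ(a) = ρ₀^ℓ(a)` for every nonzero `a`.
(ii) If `σ` is an orientation-reversing automorphism, then for any fixed nonzero `a` there exists
an integer `ℓ` such that `σ(ρ₀^j(a)) = ρ₀^{ℓ−j}(a)` for every integer `j`. -/
theorem automorphisms_fixing_zero_act_dihedrally
    (v : ℕ) (hv : 3 ≤ v)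
    (G : Type*) [AddCommGroup G] [Fintype G] (hcard : Fintype.card G = v)
    (ρ₀ : Equiv.Perm G) (hρ0 : ρ₀ 0 = 0)
    (hcyc : ∀ a b : G, a ≠ 0 → b ≠ 0 → ∃ k : ℕ, (ρ₀ ^ k) a = b)
    (σ : G → G) (hσ : Function.Bijective σ) (hσ0 : σ 0 = 0) :
    ((∀ x y : G, x ≠ y → σ (x + ρ₀ (y - x)) = σ x + ρ₀ (σ y - σ x)) →
      ∃ ℓ : ℤ, ∀ a : G, a ≠ 0 → σ a = (ρ₀ ^ ℓ) a) ∧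
    ((∀ x y : G, x ≠ y → σ (x + ρ₀ (y - x)) = σ x + ρ₀⁻¹ (σ y - σ x)) →
      ∀ a : G, a ≠ 0 → ∃ ℓ : ℤ, ∀ j : ℤ, σ ((ρ₀ ^ j) a) = (ρ₀ ^ (ℓ - j)) a) := by
  have hρinv0 : ρ₀⁻¹ 0 = 0 := by
    conv_lhs => rw [← hρ0]
    exact ρ₀.symm_apply_apply 0
  have hzZ : ∀ j : ℤ, (ρ₀ ^ j) 0 = 0 := by
    intro j
    induction j using Int.induction_on with
    | zero => simp
    | succ n ih =>
        have : ρ₀ ^ ((n : ℤ) + 1) = ρ₀ * ρ₀ ^ (n : ℤ) := by group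
        rw [this, Equiv.Perm.mul_apply, ih, hρ0]
    | pred n ih =>
        have : ρ₀ ^ (-(n : ℤ) - 1) = ρ₀⁻¹ * ρ₀ ^ (-(n : ℤ)) := by group
        rw [this, Equiv.Perm.mul_apply, ih, hρinv0]
  have hne : ∀ (j : ℤ) (b : G), b ≠ 0 → (ρ₀ ^ j) b ≠ 0 := by
    intro j b hb h
    exact hb ((ρ₀ ^ j).injective (h.trans (hzZ j).symm))
  have hneI : ∀ b : G, b ≠ 0 → ρ₀⁻¹ b ≠ 0 := by
    intro b hb h
    exact hb (ρ₀⁻¹.injective (h.trans hρinv0.symm))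
  have hσne : ∀ b : G, b ≠ 0 → σ b ≠ 0 := by
    intro b hb h
    exact hb (hσ.injective (h.trans hσ0.symm))
  have : Nontrivial G := Fintype.one_lt_card_iff_nontrivial.mp (by omega)
  constructor
  · intro h
    have key : ∀ y : G, y ≠ 0 → σ (ρ₀ y) = ρ₀ (σ y) := by
      intro y hy
      have := h 0 y (Ne.symm hy)
      simpa [hσ0] using this
    obtain ⟨a₀, ha₀⟩ := exists_ne (0 : G)
    obtain ⟨k, hk⟩ := hcyc a₀ (σ a₀) ha₀ (hσne a₀ ha₀)
    have step : ∀ n : ℕ, σ ((ρ₀ ^ n) a₀) = (ρ₀ ^ n) (σ a₀) := by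
      intro n
      induction n with
      | zero => simp
      | succ n ih =>
          have e : ρ₀ ^ (n + 1) = ρ₀ * ρ₀ ^ n := by group
          have hn0 : (ρ₀ ^ (n : ℤ)) a₀ ≠ 0 := hne _ _ ha₀
          rw [zpow_natCast] at hn0
          rw [e, Equiv.Perm.mul_apply, key _ hn0, ih, Equiv.Perm.mul_apply]
    refine ⟨(k : ℤ), fun b hb => ?_⟩
    obtain ⟨m, hm⟩ := hcyc a₀ b ha₀ hb
    rw [zpow_natCast, ← hm, step, ← hk, ← Equiv.Perm.mul_apply, ← Equiv.Perm.mul_apply,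
      ← pow_add, ← pow_add, add_comm]
  · intro h a ha
    have key : ∀ y : G, y ≠ 0 → σ (ρ₀ y) = ρ₀⁻¹ (σ y) := by
      intro y hy
      have := h 0 y (Ne.symm hy)
      simpa [hσ0] using this
    have key' : ∀ y : G, y ≠ 0 → σ (ρ₀⁻¹ y) = ρ₀ (σ y) := by
      intro y hy
      have := key (ρ₀⁻¹ y) (hneI y hy)
      rw [show ∀ z, ρ₀ (ρ₀⁻¹ z) = z from ρ₀.apply_symm_apply] at this
      rw [this, show ∀ z, ρ₀ (ρ₀⁻¹ z) = z from ρ₀.apply_symm_apply]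
    have step : ∀ j : ℤ, σ ((ρ₀ ^ j) a) = (ρ₀ ^ (-j)) (σ a) := by
      intro j
      induction j using Int.induction_on with
      | zero => simp
      | succ n ih =>
          have e1 : ρ₀ ^ ((n : ℤ) + 1) = ρ₀ * ρ₀ ^ (n : ℤ) := by group
          have e2 : ρ₀ ^ (-((n : ℤ) + 1)) = ρ₀⁻¹ * ρ₀ ^ (-(n : ℤ)) := by group
          rw [e1, Equiv.Perm.mul_apply, key _ (hne _ _ ha), ih, e2, Equiv.Perm.mul_apply]
      | pred n ih =>
          have e1 : ρ₀ ^ (-(n : ℤ) - 1) = ρ₀⁻¹ * ρ₀ ^ (-(n : ℤ)) := by group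
          have e2 : ρ₀ ^ (-(-(n : ℤ) - 1)) = ρ₀ * ρ₀ ^ (-(-(n : ℤ))) := by group
          rw [e1, Equiv.Perm.mul_apply, key' _ (hne _ _ ha), ih, e2, Equiv.Perm.mul_apply]
    obtain ⟨k, hk⟩ := hcyc a (σ a) ha (hσne a ha)
    refine ⟨(k : ℤ), fun j => ?_⟩
    rw [step, ← zpow_natCast ρ₀ k] at *
    rw [← hk, ← Equiv.Perm.mul_apply, ← zpow_add, neg_add_eq_sub]
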